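/- arXiv:1410.5913 — 2 statements merged into one kernel-verified Lean document; each statement's English description precedes it below -/
import Mathlib

section
/- Let X be a nonnegative random variable and λ > 0, p ≥ 1. Suppose there exist constants C₁ ≥ 1, C₂ > 0, t ∈ (0,1], and a random variable N taking values in ℕ with ℙ(N = k) = e^{−λ} λ^k / k!, such that for every k, ℙ(X ≤ ε | N = k) ≤ ε^p for all 0 < ε ≤ C₁^{-1}(t/(k+1))^{C₂}. Then 𝔼[X^{−np}] < ∞ for every positive integer n with np < p, and more generally 𝔼[X^{−q}] < ∞ for every q < p. -/
open MeasureTheory ProbabilityTheory Set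

lemma aux_moment_bound {Ω : Type*} [MeasurableSpace Ω] (ν : Measure Ω)
    [IsProbabilityMeasure ν] (X : Ω → ℝ) (hX : Measurable X) (hXnn : ∀ ω, 0 ≤ X ω)
    (p q δ : ℝ) (hq : 0 < q) (hqp : q < p) (hδ0 : 0 < δ) (hδ1 : δ ≤ 1)
    (hsb : ∀ ε : ℝ, 0 < ε → ε ≤ δ → ν {ω | X ω ≤ ε} ≤ ENNReal.ofReal (ε ^ p)) :
    ∫⁻ ω, ENNReal.ofReal (X ω ^ (-q)) ∂ν
      ≤ ENNReal.ofReal (δ ^ (-q) * (1 + q / (p - q))) := by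
  have hpq : 0 < p - q := by linarith
  set A : ℝ := δ ^ (-q) with hA
  have hA1 : 1 ≤ A := Real.one_le_rpow_of_pos_of_le_one_of_nonpos hδ0 hδ1 (by linarith)
  have hA0 : 0 < A := lt_of_lt_of_le one_pos hA1
  rw [lintegral_eq_lintegral_meas_lt ν (Filter.Eventually.of_forall fun ω =>
      Real.rpow_nonneg (hXnn ω) _) ((show Measurable fun ω => X ω ^ (-q) by fun_prop).aemeasurable)]
  rw [← Ioc_union_Ioi_eq_Ioi hA0.le,
    lintegral_union measurableSet_Ioi (Ioc_disjoint_Ioi le_rfl)]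
  have h1 : ∫⁻ s in Ioc 0 A, ν {a | s < X a ^ (-q)} ≤ ENNReal.ofReal A := by
    calc ∫⁻ s in Ioc 0 A, ν {a | s < X a ^ (-q)} ≤ ∫⁻ _ in Ioc 0 A, 1 :=
          lintegral_mono fun s => prob_le_one
      _ = volume (Ioc (0:ℝ) A) := setLIntegral_one _
      _ = ENNReal.ofReal A := by rw [Real.volume_Ioc, sub_zero]
  have hexp : -(p/q) < -1 := by
    rw [neg_lt_neg_iff]
    exact (one_lt_div hq).2 hqp
  have h2 : ∫⁻ s in Ioi A, ν {a | s < X a ^ (-q)}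
      ≤ ENNReal.ofReal (δ ^ (p - q) * (q / (p - q))) := by
    have hbd : ∀ s ∈ Ioi A, ν {a | s < X a ^ (-q)} ≤ ENNReal.ofReal (s ^ (-(p/q))) := by
      intro s hs
      have hsA : A < s := hs
      have hs0 : (0:ℝ) < s := hA0.trans hsA
      set ε : ℝ := s ^ (-q⁻¹) with hε
      have hε0 : 0 < ε := Real.rpow_pos_of_pos hs0 _
      have hεs : ε ^ (-q) = s := by
        rw [hε, ← Real.rpow_mul hs0.le]
        rw [show -q⁻¹ * -q = 1 by field_simp, Real.rpow_one]
      have hεδ : ε ≤ δ := by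
        have h3 : s ^ (-q⁻¹) < A ^ (-q⁻¹) :=
          Real.rpow_lt_rpow_of_neg hA0 hsA (by simp [hq, inv_pos.2 hq])
        have h4 : A ^ (-q⁻¹) = δ := by
          rw [hA, ← Real.rpow_mul hδ0.le]
          rw [show -q * -q⁻¹ = 1 by field_simp, Real.rpow_one]
        exact le_of_lt (h4 ▸ h3)
      have hsubset : {a | s < X a ^ (-q)} ⊆ {ω | X ω ≤ ε} := by
        intro a ha
        simp only [mem_setOf_eq] at ha ⊢
        rcases (hXnn a).eq_or_lt with h0 | hXa0
        · rw [← h0, Real.zero_rpow (neg_ne_zero.2 hq.ne')] at ha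
          exact absurd ha (not_lt.2 hs0.le)
        · have : ε ^ (-q) < X a ^ (-q) := hεs.symm ▸ ha
          exact le_of_lt ((Real.rpow_lt_rpow_iff_of_neg hε0 hXa0 (neg_neg_iff_pos.2 hq)).1 this)
      have hεp : ε ^ p = s ^ (-(p/q)) := by
        rw [hε, ← Real.rpow_mul hs0.le]
        congr 1
        field_simp
      calc ν {a | s < X a ^ (-q)} ≤ ν {ω | X ω ≤ ε} := measure_mono hsubset
        _ ≤ ENNReal.ofReal (ε ^ p) := hsb ε hε0 hεδ
        _ = ENNReal.ofReal (s ^ (-(p/q))) := by rw [hεp]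
    have hInt : IntegrableOn (fun s : ℝ => s ^ (-(p/q))) (Ioi A) :=
      integrableOn_Ioi_rpow_of_lt hexp hA0
    have hval : ∫ s in Ioi A, s ^ (-(p/q)) = δ ^ (p - q) * (q / (p - q)) := by
      rw [integral_Ioi_rpow_of_lt hexp hA0]
      have hAe : A ^ (-(p/q) + 1) = δ ^ (p - q) := by
        rw [hA, ← Real.rpow_mul hδ0.le]
        congr 1
        field_simp
        ring
      rw [hAe]
      have hne : -(p/q) + 1 < 0 := by linarith
      rw [div_eq_iff hne.ne]
      field_simp
      ring
    calc ∫⁻ s in Ioi A, ν {a | s < X a ^ (-q)}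
        ≤ ∫⁻ s in Ioi A, ENNReal.ofReal (s ^ (-(p/q))) :=
          setLIntegral_mono (by fun_prop) hbd
      _ = ENNReal.ofReal (∫ s in Ioi A, s ^ (-(p/q))) := by
          rw [MeasureTheory.ofReal_integral_eq_lintegral_ofReal hInt]
          filter_upwards [ae_restrict_mem measurableSet_Ioi] with s hs
          exact Real.rpow_nonneg (le_of_lt (hA0.trans hs)) _
      _ = ENNReal.ofReal (δ ^ (p - q) * (q / (p - q))) := by rw [hval]
  calc _ ≤ ENNReal.ofReal A + ENNReal.ofReal (δ ^ (p - q) * (q / (p - q))) :=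
        add_le_add h1 h2
    _ = ENNReal.ofReal (A + δ ^ (p - q) * (q / (p - q))) :=
        (ENNReal.ofReal_add hA0.le (mul_nonneg (Real.rpow_nonneg hδ0.le _)
          (div_nonneg hq.le hpq.le))).symm
    _ ≤ ENNReal.ofReal (δ ^ (-q) * (1 + q / (p - q))) := by
        apply ENNReal.ofReal_le_ofReal
        have hle1 : δ ^ (p - q) ≤ 1 := Real.rpow_le_one hδ0.le hδ1 hpq.le
        have hqq : 0 ≤ q / (p - q) := div_nonneg hq.le hpq.le
        nlinarith [hA1]

lemma aux_summable (m : ℕ) {lam : ℝ} (hlam : 0 < lam) :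
    Summable (fun k : ℕ => ((k : ℝ) + 1) ^ m * lam ^ k / (Nat.factorial k)) := by
  have hs : Summable (fun k : ℕ => ((k : ℝ) + 1) ^ m * (1/2 : ℝ) ^ k) := by
    have h := summable_pow_mul_geometric_of_norm_lt_one (R := ℝ) m
      (r := (1/2 : ℝ)) (by rw [Real.norm_eq_abs]; rw [abs_of_pos] <;> norm_num)
    have h2 := (summable_nat_add_iff 1).2 h
    have h3 := h2.mul_left 2
    refine h3.congr fun k => ?_
    push_cast
    ring
  obtain ⟨B, hB⟩ := hs.tendsto_atTop_zero.bddAbove_range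
  have hBk : ∀ k : ℕ, ((k : ℝ) + 1) ^ m * (1/2 : ℝ) ^ k ≤ B :=
    fun k => hB (Set.mem_range_self k)
  refine Summable.of_nonneg_of_le (fun k => by positivity) (fun k => ?_)
    ((Real.summable_pow_div_factorial (2 * lam)).mul_left B)
  have key : (1/2 : ℝ) ^ k * (2 * lam) ^ k = lam ^ k := by rw [← mul_pow]; ring_nf
  calc ((k : ℝ) + 1) ^ m * lam ^ k / (Nat.factorial k)
      = (((k : ℝ) + 1) ^ m * (1/2 : ℝ) ^ k) * ((2 * lam) ^ k / (Nat.factorial k)) := by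
        rw [← key]; ring
    _ ≤ B * ((2 * lam) ^ k / (Nat.factorial k)) :=
        mul_le_mul_of_nonneg_right (hBk k) (by positivity)

/-- Negative moments from conditional small-ball estimates: if `N` is Poisson(λ)
and `μ(X ≤ ε | N = k) ≤ ε^p` for `0 < ε ≤ C₁⁻¹ (t/(k+1))^{C₂}`, then
`𝔼[X^{-np}] < ∞` for every positive integer `n` with `np < p`, and more generally
`𝔼[X^{-q}] < ∞` for every `0 < q < p`. -/
theorem negative_moments_from_conditional_small_ball
    {Ω : Type*} [MeasurableSpace Ω] (μ : Measure Ω) [IsProbabilityMeasure μ]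
    (X : Ω → ℝ) (hXmeas : Measurable X) (hXnonneg : ∀ ω, 0 ≤ X ω)
    (N : Ω → ℕ) (hNmeas : Measurable N)
    (lam p C₁ C₂ t : ℝ) (hlam : 0 < lam) (hp : 1 ≤ p) (hC₁ : 1 ≤ C₁)
    (hC₂ : 0 < C₂) (ht : t ∈ Set.Ioc (0:ℝ) 1)
    (hN : ∀ k : ℕ, μ {ω | N ω = k}
      = ENNReal.ofReal (Real.exp (-lam) * lam ^ k / (Nat.factorial k)))
    (hcond : ∀ k : ℕ, ∀ ε : ℝ, 0 < ε → ε ≤ C₁⁻¹ * (t / ((k : ℝ) + 1)) ^ C₂ →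
      (μ[|{ω | N ω = k}]) {ω | X ω ≤ ε} ≤ ENNReal.ofReal (ε ^ p)) :
    (∀ n : ℕ, 0 < n → (n : ℝ) * p < p →
      (∫⁻ ω, ENNReal.ofReal (X ω ^ (-((n : ℝ) * p))) ∂μ) < ⊤) ∧
    (∀ q : ℝ, 0 < q → q < p →
      (∫⁻ ω, ENNReal.ofReal (X ω ^ (-q)) ∂μ) < ⊤) := by
  obtain ⟨ht0, ht1⟩ := ht
  have hp0 : 0 < p := lt_of_lt_of_le one_pos hp
  have hC₁0 : 0 < C₁ := lt_of_lt_of_le one_pos hC₁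
  constructor
  · intro n hn hnp
    exfalso
    have h1 : (1 : ℝ) ≤ (n : ℝ) := by exact_mod_cast hn
    nlinarith
  intro q hq hqp
  have hpq : 0 < p - q := by linarith
  -- the partition sets
  set s : ℕ → Set Ω := fun k => {ω | N ω = k} with hs
  have hsm : ∀ k, MeasurableSet (s k) := fun k => hNmeas (measurableSet_singleton k)
  set a : ℕ → ℝ := fun k => Real.exp (-lam) * lam ^ k / (Nat.factorial k) with ha
  have ha0 : ∀ k, 0 < a k := fun k => by positivity
  have hμs : ∀ k, μ (s k) = ENNReal.ofReal (a k) := hN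
  have hμs0 : ∀ k, μ (s k) ≠ 0 := fun k => by
    rw [hμs k]; exact (ENNReal.ofReal_pos.2 (ha0 k)).ne'
  have hμst : ∀ k, μ (s k) ≠ ⊤ := fun k => by rw [hμs k]; exact ENNReal.ofReal_ne_top
  -- small-ball radii
  set δ : ℕ → ℝ := fun k => C₁⁻¹ * (t / ((k : ℝ) + 1)) ^ C₂ with hδ
  have hk1 : ∀ k : ℕ, (1 : ℝ) ≤ (k : ℝ) + 1 := fun k => by
    have := Nat.cast_nonneg (α := ℝ) k; linarith
  have hbase0 : ∀ k : ℕ, 0 < t / ((k : ℝ) + 1) := fun k =>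
    div_pos ht0 (lt_of_lt_of_le one_pos (hk1 k))
  have hbase1 : ∀ k : ℕ, t / ((k : ℝ) + 1) ≤ 1 := fun k =>
    div_le_one_of_le₀ (ht1.trans (hk1 k)) (by positivity)
  have hδ0 : ∀ k, 0 < δ k := fun k =>
    mul_pos (inv_pos.2 hC₁0) (Real.rpow_pos_of_pos (hbase0 k) _)
  have hδ1 : ∀ k, δ k ≤ 1 := fun k => by
    have h1 : C₁⁻¹ ≤ 1 := inv_le_one_of_one_le₀ hC₁
    have h2 : (t / ((k : ℝ) + 1)) ^ C₂ ≤ 1 :=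
      Real.rpow_le_one (hbase0 k).le (hbase1 k) hC₂.le
    calc δ k ≤ 1 * 1 := mul_le_mul h1 h2 (Real.rpow_nonneg (hbase0 k).le _) one_pos.le
      _ = 1 := one_mul 1
  -- exponent for polynomial bound
  set m : ℕ := ⌈C₂ * q⌉₊ with hm
  have hδ_bound : ∀ k : ℕ, δ k ^ (-q) ≤ C₁ ^ q * (((k : ℝ) + 1) ^ m / t ^ m) := by
    intro k
    set u : ℝ := ((k : ℝ) + 1) / t with hu
    have hu1 : 1 ≤ u := (one_le_div ht0).2 (ht1.trans (hk1 k))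
    have hu0 : 0 < u := lt_of_lt_of_le one_pos hu1
    have hrw : δ k ^ (-q) = C₁ ^ q * u ^ (C₂ * q) := by
      rw [hδ]
      rw [Real.mul_rpow (by positivity) (Real.rpow_nonneg (hbase0 k).le _)]
      congr 1
      · rw [← Real.rpow_neg_one C₁, ← Real.rpow_mul hC₁0.le]
        ring_nf
      · rw [show t / ((k : ℝ) + 1) = u⁻¹ by rw [hu]; field_simp]
        rw [← Real.rpow_neg_one u, ← Real.rpow_mul hu0.le, ← Real.rpow_mul hu0.le]
        ring_nf
    rw [hrw]
    have h5 : u ^ (C₂ * q) ≤ u ^ (m : ℝ) :=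
      Real.rpow_le_rpow_of_exponent_le hu1 (Nat.le_ceil _)
    have h6 : u ^ (m : ℝ) = ((k : ℝ) + 1) ^ m / t ^ m := by
      rw [Real.rpow_natCast, hu, div_pow]
    have h7 : (0:ℝ) ≤ C₁ ^ q := Real.rpow_nonneg hC₁0.le _
    calc C₁ ^ q * u ^ (C₂ * q) ≤ C₁ ^ q * u ^ (m : ℝ) :=
          mul_le_mul_of_nonneg_left h5 h7
      _ = C₁ ^ q * (((k : ℝ) + 1) ^ m / t ^ m) := by rw [h6]
  -- decomposition of the integral
  set f : Ω → ENNReal := fun ω => ENNReal.ofReal (X ω ^ (-q)) with hf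
  have hcover : (⋃ k, s k) = univ := by
    ext ω; simp only [mem_iUnion, mem_univ, iff_true]; exact ⟨N ω, rfl⟩
  have hdisj : Pairwise (Function.onFun Disjoint s) := by
    intro i j hij
    rw [Function.onFun, Set.disjoint_left]
    intro ω h1 h2
    exact hij (h1.symm.trans h2)
  have hstep1 : ∫⁻ ω, f ω ∂μ = ∑' k, ∫⁻ ω in s k, f ω ∂μ := by
    rw [← setLIntegral_univ, ← hcover, lintegral_iUnion hsm hdisj]
  have hstep2 : ∀ k, ∫⁻ ω in s k, f ω ∂μ = μ (s k) * ∫⁻ ω, f ω ∂(μ[|s k]) := by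
    intro k
    rw [ProbabilityTheory.cond, lintegral_smul_measure, smul_eq_mul, ← mul_assoc,
      ENNReal.mul_inv_cancel (hμs0 k) (hμst k), one_mul]
  set c : ℝ := 1 + q / (p - q) with hc
  have hc0 : 0 < c := by positivity
  have hstep3 : ∀ k, ∫⁻ ω, f ω ∂(μ[|s k]) ≤ ENNReal.ofReal (δ k ^ (-q) * c) := by
    intro k
    haveI : IsProbabilityMeasure (μ[|s k]) := cond_isProbabilityMeasure (hμs0 k)
    exact aux_moment_bound (μ[|s k]) X hXmeas hXnonneg p q (δ k) hq hqp (hδ0 k) (hδ1 k)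
      (fun ε hε1 hε2 => hcond k ε hε1 hε2)
  -- the real-valued dominating series
  set b : ℕ → ℝ := fun k => a k * (C₁ ^ q * (((k : ℝ) + 1) ^ m / t ^ m) * c) with hb
  have hterm : ∀ k, μ (s k) * ∫⁻ ω, f ω ∂(μ[|s k]) ≤ ENNReal.ofReal (b k) := by
    intro k
    calc μ (s k) * ∫⁻ ω, f ω ∂(μ[|s k])
        ≤ ENNReal.ofReal (a k) * ENNReal.ofReal (δ k ^ (-q) * c) := by
          rw [hμs k]; exact mul_le_mul_right (hstep3 k) _
      _ = ENNReal.ofReal (a k * (δ k ^ (-q) * c)) :=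
          (ENNReal.ofReal_mul (ha0 k).le).symm
      _ ≤ ENNReal.ofReal (b k) := by
          apply ENNReal.ofReal_le_ofReal
          apply mul_le_mul_of_nonneg_left _ (ha0 k).le
          exact mul_le_mul_of_nonneg_right (hδ_bound k) hc0.le
  have hsummable : Summable b := by
    have h1 : Summable (fun k : ℕ => ((k : ℝ) + 1) ^ m * lam ^ k / (Nat.factorial k)) :=
      aux_summable m hlam
    have h2 := (h1.mul_left (Real.exp (-lam) * C₁ ^ q * c / t ^ m))
    refine h2.congr fun k => ?_
    rw [hb, ha]
    field_simp
  calc ∫⁻ ω, f ω ∂μ = ∑' k, ∫⁻ ω in s k, f ω ∂μ := hstep1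
    _ = ∑' k, μ (s k) * ∫⁻ ω, f ω ∂(μ[|s k]) := by
        exact tsum_congr hstep2
    _ ≤ ∑' k, ENNReal.ofReal (b k) := ENNReal.tsum_le_tsum hterm
    _ = ENNReal.ofReal (∑' k, b k) :=
        (ENNReal.ofReal_tsum_of_nonneg (fun k => by positivity) hsummable).symm
    _ < ⊤ := ENNReal.ofReal_lt_top
end

section
/- Let Q : ℝⁿ → ℝ be the quadratic form Q(v) = vᵀ A v of a symmetric positive semidefinite matrix A with ‖A‖ ≤ R. If for every unit vector v and every ε ∈ (0, ε₀], ℙ(vᵀ A v ≤ ε) ≤ ε^p with p > n, then there exist constants c, ε₁ > 0 (depending on n, p, R, ε₀) such that ℙ(inf_{|v|=1} vᵀ A v ≤ ε) ≤ c ε^{p−n} for all ε ∈ (0, ε₁], via a covering argument on the unit sphere. -/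
open MeasureTheory Metric ENNReal

variable {n : ℕ}

local notation "E" n => EuclideanSpace ℝ (Fin n)

lemma sep_card_le (hn : 0 < n) {δ : ℝ} (hδ : 0 < δ) (hδ1 : δ ≤ 1)
    (s : Finset (EuclideanSpace ℝ (Fin n))) (hs : ∀ c ∈ s, ‖c‖ = 1)
    (hsep : ∀ c ∈ s, ∀ d ∈ s, c ≠ d → δ ≤ ‖c - d‖) :
    (s.card : ℝ) ≤ (3 / δ) ^ n := by
  classical
  haveI : Nontrivial (EuclideanSpace ℝ (Fin n)) :=
    Module.nontrivial_of_finrank_pos (R := ℝ) (by simp [hn])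
  set μ : Measure (EuclideanSpace ℝ (Fin n)) := volume
  have hfin : Module.finrank ℝ (EuclideanSpace ℝ (Fin n)) = n := finrank_euclideanSpace_fin
  set A := ⋃ c ∈ s, ball (c : EuclideanSpace ℝ (Fin n)) (δ / 2) with hA
  have D : Set.Pairwise (s : Set (EuclideanSpace ℝ (Fin n)))
      (Function.onFun Disjoint fun c => ball (c : EuclideanSpace ℝ (Fin n)) (δ / 2)) := by
    rintro c hc d hd hcd
    apply ball_disjoint_ball
    rw [dist_eq_norm]
    have := hsep c hc d hd hcd
    linarith
  have A_subset : A ⊆ ball (0 : EuclideanSpace ℝ (Fin n)) (3 / 2) := by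
    refine Set.iUnion₂_subset fun x hx => ?_
    apply ball_subset_ball'
    rw [dist_zero_right, hs x hx]
    linarith
  have I : (s.card : ℝ≥0∞) * ENNReal.ofReal ((δ / 2) ^ n) * μ (ball 0 1) ≤
      ENNReal.ofReal ((3 / 2 : ℝ) ^ n) * μ (ball 0 1) := by
    calc (s.card : ℝ≥0∞) * ENNReal.ofReal ((δ / 2) ^ n) * μ (ball 0 1) = μ A := by
          rw [hA, measure_biUnion_finset D fun c _ => measurableSet_ball]
          have I : (0:ℝ) < δ / 2 := by linarith
          simp only [μ.addHaar_ball_of_pos _ I, hfin]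
          simp [Finset.sum_const, mul_assoc]
      _ ≤ μ (ball (0 : EuclideanSpace ℝ (Fin n)) (3 / 2)) := measure_mono A_subset
      _ = ENNReal.ofReal ((3 / 2 : ℝ) ^ n) * μ (ball 0 1) := by
          rw [μ.addHaar_ball_of_pos _ (by norm_num : (0:ℝ) < 3/2), hfin]
  have J : (s.card : ℝ≥0∞) * ENNReal.ofReal ((δ / 2) ^ n) ≤ ENNReal.ofReal ((3 / 2 : ℝ) ^ n) :=
    (ENNReal.mul_le_mul_iff_left (measure_ball_pos _ _ zero_lt_one).ne' measure_ball_lt_top.ne).1 I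
  have K : (s.card : ℝ) * (δ / 2) ^ n ≤ (3 / 2 : ℝ) ^ n := by
    have := ENNReal.toReal_le_of_le_ofReal (by positivity) J
    rw [ENNReal.toReal_mul, ENNReal.toReal_ofReal (by positivity)] at this
    simpa using this
  have hpow : (0:ℝ) < (δ / 2) ^ n := by positivity
  rw [div_pow]
  rw [le_div_iff₀ (by positivity)]
  calc (s.card : ℝ) * δ ^ n = (s.card : ℝ) * (δ/2)^n * 2^n := by
        rw [div_pow]; field_simp
    _ ≤ (3/2:ℝ)^n * 2^n := mul_le_mul_of_nonneg_right K (by positivity)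
    _ = 3 ^ n := by rw [div_pow]; field_simp

lemma exists_net (hn : 0 < n) {δ : ℝ} (hδ : 0 < δ) (hδ1 : δ ≤ 1) :
    ∃ s : Finset (EuclideanSpace ℝ (Fin n)), (∀ c ∈ s, ‖c‖ = 1) ∧
      (s.card : ℝ) ≤ (3 / δ) ^ n ∧
      ∀ v : EuclideanSpace ℝ (Fin n), ‖v‖ = 1 → ∃ w ∈ s, ‖v - w‖ ≤ δ := by
  classical
  set P : Finset (EuclideanSpace ℝ (Fin n)) → Prop := fun s =>
    (∀ c ∈ s, ‖c‖ = 1) ∧ ∀ c ∈ s, ∀ d ∈ s, c ≠ d → δ ≤ ‖c - d‖ with hP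
  have hbdd : ∀ s, P s → (s.card : ℝ) ≤ (3/δ)^n := fun s hs => sep_card_le hn hδ hδ1 s hs.1 hs.2
  set S : Set ℕ := {k | ∃ s, P s ∧ s.card = k} with hS
  have hSne : S.Nonempty := ⟨0, ∅, by simp [hP], rfl⟩
  have hSbdd : BddAbove S := by
    refine ⟨Nat.ceil ((3/δ)^n), ?_⟩
    rintro k ⟨s, hs, rfl⟩
    have h1 := hbdd s hs
    have h2 : ((3/δ)^n : ℝ) ≤ (Nat.ceil ((3/δ)^n) : ℝ) := Nat.le_ceil _
    exact_mod_cast h1.trans h2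
  obtain ⟨s, hs, hcard⟩ : ∃ s, P s ∧ s.card = sSup S := Nat.sSup_mem hSne hSbdd
  refine ⟨s, hs.1, hbdd s hs, fun v hv => ?_⟩
  by_contra hcon
  push_neg at hcon
  have hvs : v ∉ s := fun h => absurd (hcon v h) (by simp [hδ.le])
  have : P (insert v s) := by
    constructor
    · intro c hc
      rcases Finset.mem_insert.1 hc with rfl | hc
      · exact hv
      · exact hs.1 c hc
    · intro c hc d hd hcd
      rcases Finset.mem_insert.1 hc with h1 | h1
      · rcases Finset.mem_insert.1 hd with h2 | h2
        · exact absurd (h1.trans h2.symm) hcd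
        · subst h1; exact (hcon d h2).le
      · rcases Finset.mem_insert.1 hd with h2 | h2
        · subst h2; rw [norm_sub_rev]; exact (hcon c h1).le
        · exact hs.2 c h1 d h2 hcd
  have hmem : (insert v s).card ∈ S := ⟨_, this, rfl⟩
  have := le_csSup hSbdd hmem
  rw [Finset.card_insert_of_notMem hvs, hcard] at this
  omega


lemma quad_lip (A : EuclideanSpace ℝ (Fin n) →L[ℝ] EuclideanSpace ℝ (Fin n)) {R : ℝ}
    (hA : ‖A‖ ≤ R) {v w : EuclideanSpace ℝ (Fin n)} (hv : ‖v‖ = 1) (hw : ‖w‖ = 1) :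
    inner (𝕜 := ℝ) w (A w) ≤ inner (𝕜 := ℝ) v (A v) + 2 * R * ‖v - w‖ := by
  have key : inner (𝕜 := ℝ) w (A w) - inner (𝕜 := ℝ) v (A v)
      = inner (𝕜 := ℝ) (w - v) (A w) + inner (𝕜 := ℝ) v (A (w - v)) := by
    simp only [inner_sub_left, map_sub, inner_sub_right]
    ring
  have h1 : inner (𝕜 := ℝ) (w - v) (A w) ≤ ‖w - v‖ * R := by
    calc inner (𝕜 := ℝ) (w - v) (A w) ≤ ‖w - v‖ * ‖A w‖ := real_inner_le_norm _ _
      _ ≤ ‖w - v‖ * R := by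
          refine mul_le_mul_of_nonneg_left ?_ (norm_nonneg _)
          calc ‖A w‖ ≤ ‖A‖ * ‖w‖ := A.le_opNorm w
            _ ≤ R := by rw [hw, mul_one]; exact hA
  have h2 : inner (𝕜 := ℝ) v (A (w - v)) ≤ R * ‖w - v‖ := by
    calc inner (𝕜 := ℝ) v (A (w - v)) ≤ ‖v‖ * ‖A (w - v)‖ := real_inner_le_norm _ _
      _ = ‖A (w - v)‖ := by rw [hv, one_mul]
      _ ≤ ‖A‖ * ‖w - v‖ := A.le_opNorm _
      _ ≤ R * ‖w - v‖ := mul_le_mul_of_nonneg_right hA (norm_nonneg _)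
  have hnn : ‖w - v‖ = ‖v - w‖ := norm_sub_rev _ _
  rw [← hnn]
  linarith [key, h1, h2]

/-- Covering argument on the unit sphere: if `A` is a random symmetric positive
semidefinite operator with `‖A ω‖ ≤ R` and
`ℙ(⟪v, A v⟫ ≤ ε) ≤ ε^p` for every unit `v` and `ε ∈ (0, ε₀]` with `p > n`, then
there are `c, ε₁ > 0` such that
`ℙ(inf_{‖v‖=1} ⟪v, A v⟫ ≤ ε) ≤ c ε^{p-n}` for all `ε ∈ (0, ε₁]`. -/
theorem small_ball_inf_quadratic_form (n : ℕ) (hn : 0 < n)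
    {Ω : Type*} [MeasurableSpace Ω] (μ : Measure Ω) [IsProbabilityMeasure μ]
    (A : Ω → EuclideanSpace ℝ (Fin n) →L[ℝ] EuclideanSpace ℝ (Fin n))
    (R ε₀ p : ℝ) (hR : 0 < R) (hε₀ : 0 < ε₀) (hp : (n : ℝ) < p)
    (hsa : ∀ ω, IsSelfAdjoint (A ω))
    (hpos : ∀ ω, ∀ v : EuclideanSpace ℝ (Fin n), 0 ≤ inner (𝕜 := ℝ) v (A ω v))
    (hbd : ∀ ω, ‖A ω‖ ≤ R)
    (hsb : ∀ v : EuclideanSpace ℝ (Fin n), ‖v‖ = 1 →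
      ∀ ε : ℝ, ε ∈ Set.Ioc 0 ε₀ →
        μ {ω | inner (𝕜 := ℝ) v (A ω v) ≤ ε} ≤ ENNReal.ofReal (ε ^ p)) :
    ∃ c > 0, ∃ ε₁ > 0, ∀ ε : ℝ, ε ∈ Set.Ioc 0 ε₁ →
      μ {ω | sInf {x : ℝ | ∃ v : EuclideanSpace ℝ (Fin n),
          ‖v‖ = 1 ∧ x = inner (𝕜 := ℝ) v (A ω v)} ≤ ε}
        ≤ ENNReal.ofReal (c * ε ^ (p - n)) := by
  classical
  refine ⟨(6*R)^n * (3:ℝ)^p, by positivity, min (ε₀/3) (2*R), by positivity, fun ε hε => ?_⟩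
  obtain ⟨hε1, hε2⟩ := hε
  have hεε₀ : 3*ε ≤ ε₀ := by have := hε2.trans (min_le_left _ _); linarith
  have hεR : ε ≤ 2*R := hε2.trans (min_le_right _ _)
  set δ : ℝ := ε/(2*R) with hδdef
  have hδ : 0 < δ := by positivity
  have hδ1 : δ ≤ 1 := by
    rw [hδdef, div_le_one (by positivity)]; exact hεR
  obtain ⟨s, hs1, hs2, hs3⟩ := exists_net hn hδ hδ1
  have hsub : {ω | sInf {x : ℝ | ∃ v : EuclideanSpace ℝ (Fin n),
        ‖v‖ = 1 ∧ x = inner (𝕜 := ℝ) v (A ω v)} ≤ ε}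
      ⊆ ⋃ w ∈ s, {ω | inner (𝕜 := ℝ) w (A ω w) ≤ 3*ε} := by
    intro ω hω
    simp only [Set.mem_setOf_eq] at hω
    set T := {x : ℝ | ∃ v : EuclideanSpace ℝ (Fin n),
        ‖v‖ = 1 ∧ x = inner (𝕜 := ℝ) v (A ω v)} with hT
    have hTne : T.Nonempty := by
      refine ⟨_, EuclideanSpace.single ⟨0, hn⟩ 1, ?_, rfl⟩
      rw [EuclideanSpace.norm_single]; norm_num
    obtain ⟨x, hxT, hxlt⟩ := Real.lt_sInf_add_pos hTne hε1
    obtain ⟨v, hv, rfl⟩ := hxT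
    obtain ⟨w, hws, hwd⟩ := hs3 v hv
    have hlip := quad_lip (A ω) (hbd ω) hv (hs1 w hws)
    have h2Rδ : 2*R*‖v-w‖ ≤ ε := by
      have : 2*R*‖v-w‖ ≤ 2*R*δ := mul_le_mul_of_nonneg_left hwd (by positivity)
      rw [hδdef] at this
      calc 2*R*‖v-w‖ ≤ 2*R*(ε/(2*R)) := this
        _ = ε := by field_simp
    refine Set.mem_biUnion hws ?_
    simp only [Set.mem_setOf_eq]
    linarith
  have hcard : (s.card : ℝ) ≤ (6*R/ε)^n := by
    have : (3/δ : ℝ) = 6*R/ε := by rw [hδdef]; field_simp; ring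
    rw [← this]; exact hs2
  calc μ _ ≤ μ (⋃ w ∈ s, {ω | inner (𝕜 := ℝ) w (A ω w) ≤ 3*ε}) := measure_mono hsub
    _ ≤ ∑ w ∈ s, μ {ω | inner (𝕜 := ℝ) w (A ω w) ≤ 3*ε} := measure_biUnion_finset_le _ _
    _ ≤ ∑ w ∈ s, ENNReal.ofReal ((3*ε) ^ p) :=
        Finset.sum_le_sum fun w hw => hsb w (hs1 w hw) (3*ε) ⟨by linarith, hεε₀⟩
    _ = (s.card : ℝ≥0∞) * ENNReal.ofReal ((3*ε) ^ p) := by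
        rw [Finset.sum_const, nsmul_eq_mul]
    _ ≤ ENNReal.ofReal ((6*R)^n * (3:ℝ)^p * ε ^ (p - n)) := by
        rw [← ENNReal.ofReal_natCast, ← ENNReal.ofReal_mul (by positivity)]
        apply ENNReal.ofReal_le_ofReal
        have hstep : (s.card : ℝ) * (3*ε)^p ≤ (6*R/ε)^n * (3*ε)^p :=
          mul_le_mul_of_nonneg_right hcard (Real.rpow_nonneg (by positivity) _)
        refine hstep.trans (le_of_eq ?_)
        rw [Real.mul_rpow (by norm_num) hε1.le, Real.rpow_sub hε1, Real.rpow_natCast, div_pow]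
        ring
end
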